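/- The infinite k-regular tree with k ≥ 3 admits no locating t-coloring for any finite t; that is, its locating chromatic number is infinite. -/

import Mathlib

open Set

/-- The distance from a vertex `v` to the color class of color `i`. -/
noncomputable def distClass {V : Type*} (G : SimpleGraph V) {t : ℕ}
    (c : V → Fin t) (v : V) (i : Fin t) : ℕ :=
  sInf {m : ℕ | ∃ x, c x = i ∧ G.dist v x = m}

/-- A locating coloring: a proper coloring in which all vertices have
pairwise distinct color codes. -/
noncomputable def IsLocatingColoring {V : Type*} (G : SimpleGraph V) {t : ℕ}
    (c : V → Fin t) : Prop :=
  (∀ u v, G.Adj u v → c u ≠ c v) ∧ Function.Injective (fun v => distClass G c v)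

section Aux

variable {V : Type*} {G : SimpleGraph V}

private lemma isPath_concat' {u v w : V} {p : G.Walk u v} (hp : p.IsPath) (h : G.Adj v w)
    (hw : w ∉ p.support) : (p.concat h).IsPath := by
  rw [← SimpleGraph.Walk.isPath_reverse_iff, SimpleGraph.Walk.reverse_concat]
  rw [SimpleGraph.Walk.cons_isPath_iff]
  refine ⟨SimpleGraph.Walk.isPath_reverse_iff _ |>.mpr hp, ?_⟩
  rwa [SimpleGraph.Walk.support_reverse, List.mem_reverse]

/-- In an acyclic connected graph a vertex has at most one neighbor strictly
closer to the root. -/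
private lemma parent_unique (hconn : G.Connected) (hacyc : G.IsAcyclic) {r u w1 w2 : V}
    (h1 : G.Adj w1 u) (h2 : G.Adj w2 u) (hne : w1 ≠ w2)
    (hd1 : G.dist r w1 + 1 = G.dist r u) (hd2 : G.dist r w2 + 1 = G.dist r u) : False := by
  classical
  obtain ⟨p1, hp1, hl1⟩ := hconn.exists_path_of_dist r w1
  obtain ⟨p2, hp2, hl2⟩ := hconn.exists_path_of_dist r w2
  have hu1 : u ∉ p1.support := by
    intro hm
    have hle := SimpleGraph.dist_le (p1.takeUntil u hm)
    have hle2 := p1.length_takeUntil_le hm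
    omega
  have hu2 : u ∉ p2.support := by
    intro hm
    have hle := SimpleGraph.dist_le (p2.takeUntil u hm)
    have hle2 := p2.length_takeUntil_le hm
    omega
  have hq1 : (p1.concat h1).IsPath := isPath_concat' hp1 h1 hu1
  have hq2 : (p2.concat h2).IsPath := isPath_concat' hp2 h2 hu2
  have heq : (⟨p1.concat h1, hq1⟩ : G.Path r u) = ⟨p2.concat h2, hq2⟩ :=
    hacyc.path_unique _ _
  have heqw : p1.concat h1 = p2.concat h2 := congrArg Subtype.val heq
  have hw2mem : w2 ∈ (p2.concat h2).support := by
    rw [SimpleGraph.Walk.support_concat]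
    rw [List.mem_append]
    exact Or.inl (SimpleGraph.Walk.end_mem_support p2)
  rw [← heqw, SimpleGraph.Walk.support_concat, List.mem_append,
    List.mem_singleton] at hw2mem
  rcases hw2mem with hmem | hequ
  · -- w2 lies on the shortest path to w1
    have hle := SimpleGraph.dist_le (p1.takeUntil w2 hmem)
    have hsplit : (p1.takeUntil w2 hmem).length + (p1.dropUntil w2 hmem).length = p1.length := by
      have := congrArg SimpleGraph.Walk.length (p1.take_spec hmem)
      rwa [SimpleGraph.Walk.length_append] at this
    have hdrop0 : (p1.dropUntil w2 hmem).length = 0 := by omega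
    exact hne (SimpleGraph.Walk.eq_of_length_eq_zero hdrop0).symm
  · exact h2.ne hequ

/-- Adjacent vertices in an acyclic connected graph have distances to the root
differing by exactly one. -/
private lemma adj_dist (hconn : G.Connected) (hacyc : G.IsAcyclic) {r u w : V}
    (h : G.Adj u w) :
    G.dist r w = G.dist r u + 1 ∨ G.dist r u = G.dist r w + 1 := by
  classical
  have huw : G.dist u w = 1 := SimpleGraph.dist_eq_one_iff_adj.mpr h
  have hwu : G.dist w u = 1 := SimpleGraph.dist_eq_one_iff_adj.mpr h.symm
  have ht1 : G.dist r w ≤ G.dist r u + 1 := by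
    have := hconn.dist_triangle (u := r) (v := u) (w := w); omega
  have ht2 : G.dist r u ≤ G.dist r w + 1 := by
    have := hconn.dist_triangle (u := r) (v := w) (w := u); omega
  have hne : G.dist r u ≠ G.dist r w := by
    intro hE
    obtain ⟨p, hp, hl⟩ := hconn.exists_path_of_dist r u
    obtain ⟨q, hq, hlq⟩ := hconn.exists_path_of_dist r w
    have hwp : w ∉ p.support := by
      intro hm
      have hle := SimpleGraph.dist_le (p.takeUntil w hm)
      have hsplit : (p.takeUntil w hm).length + (p.dropUntil w hm).length = p.length := by
        have := congrArg SimpleGraph.Walk.length (p.take_spec hm)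
        rwa [SimpleGraph.Walk.length_append] at this
      have hdrop0 : (p.dropUntil w hm).length = 0 := by omega
      exact h.ne' (SimpleGraph.Walk.eq_of_length_eq_zero hdrop0)
    have hq' : (p.concat h).IsPath := isPath_concat' hp h hwp
    have heq : (⟨p.concat h, hq'⟩ : G.Path r w) = ⟨q, hq⟩ := hacyc.path_unique _ _
    have heqw : p.concat h = q := congrArg Subtype.val heq
    have : (p.concat h).length = q.length := by rw [heqw]
    rw [SimpleGraph.Walk.length_concat] at this
    omega
  omega

/-- Every vertex has at least two distinct neighbors strictly farther from the root. -/
private lemma two_children (hconn : G.Connected) (hacyc : G.IsAcyclic) {k : ℕ} (hk : 3 ≤ k)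
    (hreg : ∀ v : V, (G.neighborSet v).ncard = k) (r u : V) :
    ∃ a b, a ≠ b ∧ G.Adj u a ∧ G.Adj u b ∧
      G.dist r a = G.dist r u + 1 ∧ G.dist r b = G.dist r u + 1 := by
  have hfin : (G.neighborSet u).Finite := by
    by_contra hinf
    have := Set.Infinite.ncard (s := G.neighborSet u) hinf
    rw [hreg u] at this; omega
  set P : Set V := {w ∈ G.neighborSet u | G.dist r w + 1 = G.dist r u} with hP
  have hPsub : P ⊆ G.neighborSet u := fun w hw => hw.1
  have hPfin : P.Finite := hfin.subset hPsub
  have hPcard : P.ncard ≤ 1 := by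
    by_contra hgt
    push_neg at hgt
    obtain ⟨a, b, ha, hb, hab⟩ := (Set.one_lt_ncard_iff hPfin).mp hgt
    exact parent_unique hconn hacyc ha.1.symm hb.1.symm hab ha.2 hb.2
  set C : Set V := G.neighborSet u \ P with hC
  have hCcard : 1 < C.ncard := by
    have := Set.ncard_diff hPsub hPfin
    rw [← hC, hreg u] at this
    omega
  obtain ⟨a, b, ha, hb, hab⟩ := (Set.one_lt_ncard_iff (hfin.subset Set.diff_subset)).mp hCcard
  have hda : G.dist r a = G.dist r u + 1 := by
    rcases adj_dist hconn hacyc (r := r) ha.1 with h | h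
    · exact h
    · exact absurd ⟨ha.1, by omega⟩ ha.2
  have hdb : G.dist r b = G.dist r u + 1 := by
    rcases adj_dist hconn hacyc (r := r) hb.1 with h | h
    · exact h
    · exact absurd ⟨hb.1, by omega⟩ hb.2
  exact ⟨a, b, hab, ha.1, hb.1, hda, hdb⟩

/-- Spheres around any vertex contain at least `2 ^ n` vertices. -/
private lemma sphere_big (hconn : G.Connected) (hacyc : G.IsAcyclic) {k : ℕ} (hk : 3 ≤ k)
    (hreg : ∀ v : V, (G.neighborSet v).ncard = k) (r : V) (n : ℕ) :
    ∃ s : Finset V, s.card = 2 ^ n ∧ ∀ u ∈ s, G.dist r u = n := by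
  classical
  induction n with
  | zero => exact ⟨{r}, by simp, by simp [SimpleGraph.dist_self]⟩
  | succ n ih =>
    obtain ⟨s, hcard, hdist⟩ := ih
    choose f g hfg hfadj hgadj hfd hgd using two_children hconn hacyc hk hreg r
    refine ⟨s.biUnion (fun u => {f u, g u}), ?_, ?_⟩
    · rw [Finset.card_biUnion]
      · have : ∀ u ∈ s, ({f u, g u} : Finset V).card = 2 := fun u _ =>
          Finset.card_pair (hfg u)
        rw [Finset.sum_congr rfl this, Finset.sum_const, smul_eq_mul, hcard]
        ring
      · intro u1 h1 u2 h2 hne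
        show Disjoint ({f u1, g u1} : Finset V) {f u2, g u2}
        rw [Finset.disjoint_left]
        intro w hw1 hw2
        have hmem : ∀ u', u' ∈ s → w ∈ ({f u', g u'} : Finset V) →
            G.Adj u' w ∧ G.dist r u' + 1 = G.dist r w := by
          intro u' hu' hw
          rcases Finset.mem_insert.mp hw with h | h
          · subst h; exact ⟨hfadj u', by rw [hfd u']⟩
          · rw [Finset.mem_singleton] at h; subst h; exact ⟨hgadj u', by rw [hgd u']⟩
        obtain ⟨ha1, hd1⟩ := hmem u1 h1 hw1
        obtain ⟨ha2, hd2⟩ := hmem u2 h2 hw2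
        exact parent_unique hconn hacyc ha1 ha2 hne hd1 hd2
    · intro w hw
      rw [Finset.mem_biUnion] at hw
      obtain ⟨u, hu, hw⟩ := hw
      rcases Finset.mem_insert.mp hw with h | h
      · subst h; rw [hfd u, hdist u hu]
      · rw [Finset.mem_singleton] at h; subst h; rw [hgd u, hdist u hu]

private lemma distClass_lipschitz (hconn : G.Connected) {t : ℕ} (c : V → Fin t)
    (u w : V) (i : Fin t) :
    distClass G c u i ≤ distClass G c w i + G.dist u w := by
  by_cases hx : ∃ x, c x = i
  · have hne : {m : ℕ | ∃ x, c x = i ∧ G.dist w x = m}.Nonempty :=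
      ⟨G.dist w hx.choose, hx.choose, hx.choose_spec, rfl⟩
    obtain ⟨x, hcx, hdx⟩ := Nat.sInf_mem hne
    have h1 : distClass G c u i ≤ G.dist u x := Nat.sInf_le ⟨x, hcx, rfl⟩
    have h2 : G.dist u x ≤ G.dist u w + G.dist w x := hconn.dist_triangle
    have : G.dist w x = distClass G c w i := hdx
    omega
  · have h1 : {m : ℕ | ∃ x, c x = i ∧ G.dist u x = m} = ∅ := by
      ext m; simp only [Set.mem_setOf_eq, Set.mem_empty_iff_false, iff_false]
      rintro ⟨x, hcx, -⟩; exact hx ⟨x, hcx⟩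
    unfold distClass
    rw [h1, Nat.sInf_empty]
    exact Nat.zero_le _

private lemma exists_poly_lt_exp (t : ℕ) : ∃ n : ℕ, (2 * n + 1) ^ t < 2 ^ n := by
  have h := tendsto_pow_const_div_const_pow_of_one_lt t (r := 2) one_lt_two
  have h2 := h.eventually (gt_mem_nhds (show (0:ℝ) < (1/3) ^ t by positivity))
  obtain ⟨n, hn1, hn2⟩ := ((Filter.eventually_ge_atTop 1).and h2).exists
  refine ⟨n, ?_⟩
  have hn1' : (1:ℝ) ≤ (n:ℝ) := by exact_mod_cast hn1
  have h2pos : (0:ℝ) < 2 ^ n := by positivity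
  have key : (3:ℝ) ^ t * (n:ℝ) ^ t < 2 ^ n := by
    rw [div_lt_iff₀ h2pos] at hn2
    have h3 : (0:ℝ) < 3 ^ t := by positivity
    have := mul_lt_mul_of_pos_left hn2 h3
    calc (3:ℝ) ^ t * (n:ℝ) ^ t < 3 ^ t * ((1/3) ^ t * 2 ^ n) := this
      _ = 2 ^ n := by rw [← mul_assoc, ← mul_pow]; norm_num
  have hcast : ((2 * n + 1 : ℕ) : ℝ) ^ t < (2:ℝ) ^ n := by
    calc ((2 * n + 1 : ℕ) : ℝ) ^ t ≤ (3 * (n:ℝ)) ^ t := by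
          apply pow_le_pow_left₀ (by positivity)
          push_cast; linarith
      _ = 3 ^ t * (n:ℝ) ^ t := by rw [mul_pow]
      _ < 2 ^ n := key
  exact_mod_cast hcast

end Aux

theorem stmt_5 {V : Type*} (G : SimpleGraph V) (k : ℕ) (hk : 3 ≤ k)
    (hconn : G.Connected) (hacyc : G.IsAcyclic)
    (hreg : ∀ v : V, (G.neighborSet v).ncard = k) :
    ¬ ∃ (t : ℕ) (c : V → Fin t), IsLocatingColoring G c := by
  rintro ⟨t, c, -, hinj⟩
  obtain ⟨r⟩ : Nonempty V := hconn.nonempty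
  have key : ∀ n : ℕ, 2 ^ n ≤ (2 * n + 1) ^ t := by
    intro n
    obtain ⟨s, hcard, hdist⟩ := sphere_big hconn hacyc hk hreg r n
    rw [← hcard]
    have hle : s.card ≤ (Fintype.piFinset fun _ : Fin t => Finset.range (2 * n + 1)).card := by
      apply Finset.card_le_card_of_injOn
        (fun u i => distClass G c u i + n - distClass G c r i)
      · intro u hu
        rw [Finset.mem_coe, Fintype.mem_piFinset]
        intro i
        rw [Finset.mem_range]
        have h1 := distClass_lipschitz hconn c u r i
        have h2 : G.dist u r = n := by rw [SimpleGraph.dist_comm]; exact hdist u hu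
        beta_reduce
        omega
      · intro u1 h1 u2 h2 heq
        apply hinj
        funext i
        have e := congrFun heq i
        simp only at e
        have b1 := distClass_lipschitz hconn c r u1 i
        have b2 := distClass_lipschitz hconn c r u2 i
        rw [hdist u1 h1] at b1
        rw [hdist u2 h2] at b2
        show distClass G c u1 i = distClass G c u2 i
        omega
    calc s.card ≤ _ := hle
      _ = (2 * n + 1) ^ t := by
        rw [Fintype.card_piFinset]
        simp [Finset.card_range]
  obtain ⟨n, hn⟩ := exists_poly_lt_exp t
  exact absurd (key n) (by omega)
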